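/- Fix t ∈ T and let K be the stochastic alternating class kernel built from the finite set F = {f_1, …, f_m} of class functions. For every set A ∈ Σ with π(A) > 0 and every f ∈ F, if A ⊆ f_x^{-1}(f_x(B_t^∞)) (where f_x(B_t^∞) is the image of B_t^∞ under f_x), then A ∈ R_t^∞. -/

import Mathlib

open MeasureTheory ProbabilityTheory Filter

universe u v

noncomputable section

/-- The `n`-th iterate of a Markov transition kernel: `kiter K 0` is the identity kernel and
`kiter K (n+1) (s, A) = ∫ K(s', A) (kiter K n)(s, ds')`, so `kiter K n = K^n` for `n ≥ 1`. -/
def kiter {S : Type u} [MeasurableSpace S] (K : Kernel S S) : ℕ → Kernel S S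
  | 0 => Kernel.id
  | n + 1 => K ∘ₖ kiter K n

/-- `K` is `π`-irreducible: from every point, every set of positive `π`-measure is reached
with positive probability after some number `n ≥ 1` of steps. -/
def PiIrreducible {S : Type u} [MeasurableSpace S] (K : Kernel S S) (π : Measure S) : Prop :=
  ∀ s : S, ∀ A : Set S, MeasurableSet A → 0 < π A → ∃ n : ℕ, 1 ≤ n ∧ 0 < kiter K n s A

/-- `π` is a stationary distribution of `K`: `∫ K(s, A) π(ds) = π(A)` for all measurable `A`. -/
def StationaryFor {S : Type u} [MeasurableSpace S] (K : Kernel S S) (π : Measure S) : Prop :=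
  ∀ A : Set S, MeasurableSet A → ∫⁻ s, K s A ∂π = π A

/-- `K` is periodic relative to `π`: there are `d ≥ 2` pairwise disjoint nonempty measurable
sets `E_0, …, E_{d-1}` and a `π`-null measurable set `N` covering `S` such that from `E_i` the
kernel moves to `E_{(i+1) mod d}` with probability one. -/
def PeriodicK {S : Type u} [MeasurableSpace S] (K : Kernel S S) (π : Measure S) : Prop :=
  ∃ d : ℕ, ∃ hd : 2 ≤ d, ∃ E : Fin d → Set S, ∃ N : Set S,
    (∀ i, MeasurableSet (E i)) ∧ MeasurableSet N ∧ (∀ i, (E i).Nonempty) ∧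
    Pairwise (fun i j => Disjoint (E i) (E j)) ∧
    (⋃ i, E i) ∪ N = Set.univ ∧ π N = 0 ∧
    ∀ i : Fin d, ∀ s ∈ E i, K s (E ⟨(i.1 + 1) % d, Nat.mod_lt _ (by omega)⟩) = 1

/-- `K` is aperiodic relative to `π` if it is not periodic. -/
def AperiodicK {S : Type u} [MeasurableSpace S] (K : Kernel S S) (π : Measure S) : Prop :=
  ¬ PeriodicK K π

/-- Total variation norm of a (bounded signed) set function:
`‖λ‖ = sup_{A measurable} λ(A) − inf_{A measurable} λ(A)`. -/
def tvnorm {S : Type u} [MeasurableSpace S] (lam : Set S → ℝ) : ℝ :=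
  (⨆ A : {A : Set S // MeasurableSet A}, lam A.1) - (⨅ A : {A : Set S // MeasurableSet A}, lam A.1)

/-- The iterates of `K` started at `s` converge to `π` in total variation norm:
`lim_{n→∞} ‖K^n(s, ·) − π‖ = 0`. -/
def TVConvergesTo {S : Type u} [MeasurableSpace S] (K : Kernel S S) (π : Measure S) (s : S) : Prop :=
  Tendsto (fun n : ℕ => tvnorm (fun A => (kiter K (n + 1) s A).toReal - (π A).toReal))
    atTop (nhds 0)

/-- The data of the class-kernel setting for a single class function `f` on a probability
space `(T, Σ, π)`: a countable index set `I`, families of measurable spaces `(X i, 𝒳 i)` and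
`(Y i, 𝒴 i)` whose disjoint union forms the generalized product space `C = ⨆ i, X i × Y i`,
an injective two-way measurable class function `f : T → C`, regular conditional probabilities
`v i : X i × 𝒴 i → [0,1]` disintegrating the (conditioned) pushforward `f_*π` on each class,
parameterized Markov transition kernels `K i x` on `(Y i, 𝒴 i)` measurable in `x`, and the
resulting class kernel `Kf` on `(T, Σ)` given by
`Kf(t, A) = (K i x)(y, {y' | ⟨x, y'⟩ ∈ f(A)})` where `f(t) = ⟨i, x, y⟩`. -/
structure ClassKernelData (T : Type u) [MeasurableSpace T] (π : Measure T) where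
  /-- the countable index set -/
  (I : Type v)
  [countI : Countable I]
  /-- the `X`-components of the generalized product space -/
  (X : I → Type v)
  /-- the `Y`-components of the generalized product space -/
  (Y : I → Type v)
  [mX : ∀ i, MeasurableSpace (X i)]
  [mY : ∀ i, MeasurableSpace (Y i)]
  /-- the class function `f : T → C = ⨆ i, X i × Y i` -/
  f : T → Σ i : I, X i × Y i
  f_inj : Function.Injective f
  f_meas : Measurable f
  /-- `f` is two-way measurable: images of measurable sets are measurable -/
  f_image : ∀ A : Set T, MeasurableSet A → MeasurableSet (f '' A)
  /-- the regular conditional probabilities `v i : X i × 𝒴 i → [0,1]` -/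
  v : ∀ i, X i → Measure (Y i)
  v_prob : ∀ i x, IsProbabilityMeasure (v i x)
  v_meas : ∀ i (V : Set (Y i)), MeasurableSet V → Measurable fun x => v i x V
  /-- the disintegration property: for each class `i` of positive `f_*π`-mass,
  `(f_*π)_i(U × V) = ∫_U v_i(x, V) (f_*π)_i(dx × Y_i)` (stated in unnormalized form, which is
  equivalent since the normalizing constant appears identically on both sides) -/
  v_eq : ∀ i : I, 0 < π.map f (Set.range (Sigma.mk i)) →
    ∀ (U : Set (X i)) (V : Set (Y i)), MeasurableSet U → MeasurableSet V →
      (π.map f).comap (Sigma.mk i) (U ×ˢ V)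
        = ∫⁻ x in U, v i x V ∂(((π.map f).comap (Sigma.mk i)).map Prod.fst)
  /-- the parameterized Markov transition kernels `K i x` on `(Y i, 𝒴 i)` -/
  K : ∀ i, X i → Kernel (Y i) (Y i)
  K_markov : ∀ i x, IsMarkovKernel (K i x)
  K_meas : ∀ i (y : Y i) (V : Set (Y i)), MeasurableSet V → Measurable fun x => K i x y V
  /-- the class kernel `Kf` on `(T, Σ)` -/
  Kf : Kernel T T
  Kf_markov : IsMarkovKernel Kf
  /-- the class kernel is given by `Kf(t, A) = (K i x)(y, {y' ∈ Y i | ⟨x, y'⟩ ∈ f(A)})`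
  where `f(t) = ⟨i, x, y⟩` -/
  Kf_eq : ∀ (t : T) (A : Set T), MeasurableSet A → ∀ (i : I) (x : X i) (y : Y i),
    f t = ⟨i, (x, y)⟩ →
      Kf t A = K i x y {y' : Y i | (⟨i, (x, y')⟩ : Σ j : I, X j × Y j) ∈ f '' A}

attribute [instance] ClassKernelData.countI ClassKernelData.mX ClassKernelData.mY

/-- The projection `f_x` of a class function onto the `X`-components. -/
def ClassKernelData.fx {T : Type u} [MeasurableSpace T] {π : Measure T}
    (d : ClassKernelData T π) : T → Σ i : d.I, d.X i :=
  fun t => ⟨(d.f t).1, (d.f t).2.1⟩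

/-- `R_t^∞`: the collection of measurable sets reachable from `t` by the kernel `K` in some
number `n ≥ 1` of steps with positive probability. -/
def Rinf {T : Type u} [MeasurableSpace T] (K : Kernel T T) (t : T) : Set (Set T) :=
  {A | MeasurableSet A ∧ ∃ n : ℕ, 1 ≤ n ∧ 0 < kiter K n t A}

/-- `B_t^∞`: the set of points `t'` such that every measurable set containing `t'` is
reachable from `t` by the kernel `K`. -/
def Binf {T : Type u} [MeasurableSpace T] (K : Kernel T T) (t : T) : Set T :=
  {t' | ∀ A : Set T, MeasurableSet A → t' ∈ A → A ∈ Rinf K t}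

/-- A finite family of class functions connects the probability space `(T, Σ, π)`:
for every measurable `A` and every pair `f, g` in the family, if
`π(f_x⁻¹(f_x(A)) ∩ g_x⁻¹((g_x(A))ᶜ)) = 0` and `π(f_x⁻¹((f_x(A))ᶜ) ∩ g_x⁻¹(g_x(A))) = 0`,
then `π(f_x⁻¹((f_x(A))ᶜ)) = 0` or `π(g_x⁻¹((g_x(A))ᶜ)) = 0`. -/
def Connects {T : Type u} [MeasurableSpace T] (π : Measure T) {m : ℕ}
    (D : Fin m → ClassKernelData.{u, v} T π) : Prop :=
  ∀ A : Set T, MeasurableSet A → ∀ k l : Fin m,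
    π ((D k).fx ⁻¹' ((D k).fx '' A) ∩ (D l).fx ⁻¹' ((D l).fx '' A)ᶜ) = 0 →
    π ((D k).fx ⁻¹' ((D k).fx '' A)ᶜ ∩ (D l).fx ⁻¹' ((D l).fx '' A)) = 0 →
    π ((D k).fx ⁻¹' ((D k).fx '' A)ᶜ) = 0 ∨ π ((D l).fx ⁻¹' ((D l).fx '' A)ᶜ) = 0

/-! ### Auxiliary lemmas -/

theorem kiter_zero' {S : Type*} [MeasurableSpace S] (K : Kernel S S) :
    kiter K 0 = Kernel.id := rfl

theorem kiter_succ' {S : Type*} [MeasurableSpace S] (K : Kernel S S) (n : ℕ) :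
    kiter K (n + 1) = K ∘ₖ kiter K n := rfl

theorem measurableSet_sigma_iff'' {I : Type*} {X : I → Type*} [∀ i, MeasurableSpace (X i)]
    {s : Set (Σ i, X i)} : MeasurableSet s ↔ ∀ i, MeasurableSet (Sigma.mk i ⁻¹' s) :=
  MeasurableSpace.measurableSet_iInf

theorem measurableEmbedding_sigmaMk' {I : Type*} {X : I → Type*} [∀ i, MeasurableSpace (X i)]
    (i : I) : MeasurableEmbedding (@Sigma.mk I X i) where
  injective := sigma_mk_injective
  measurable := fun _ hs => (measurableSet_sigma_iff''.mp hs) i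
  measurableSet_image' := fun s hs => by
    rw [measurableSet_sigma_iff'']
    intro j
    by_cases hj : j = i
    · subst hj
      rwa [Set.preimage_image_eq _ sigma_mk_injective]
    · have h0 : Sigma.mk j ⁻¹' (Sigma.mk i '' s) = ∅ := by
        ext y
        simp only [Set.mem_preimage, Set.mem_image, Set.mem_empty_iff_false, iff_false]
        rintro ⟨x, -, hx⟩
        exact hj (congrArg Sigma.fst hx).symm
      rw [h0]
      exact MeasurableSet.empty

theorem kiter_isMarkov {S : Type*} [MeasurableSpace S] (K : Kernel S S) [IsMarkovKernel K]
    (n : ℕ) : IsMarkovKernel (kiter K n) := by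
  induction n with
  | zero => exact inferInstanceAs (IsMarkovKernel (Kernel.id : Kernel S S))
  | succ n ih =>
    rw [kiter_succ']
    exact Kernel.IsMarkovKernel.comp K (kiter K n)

theorem kiter_add' {S : Type*} [MeasurableSpace S] (K : Kernel S S) [IsMarkovKernel K]
    (a b : ℕ) : kiter K (a + b) = kiter K a ∘ₖ kiter K b := by
  induction a with
  | zero => rw [Nat.zero_add, kiter_zero', Kernel.id_comp]
  | succ a ih =>
    have h1 : a + 1 + b = (a + b) + 1 := by omega
    rw [h1, kiter_succ', ih, kiter_succ', Kernel.comp_assoc]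

/-- Pointwise domination of iterates: if `c * K' s A ≤ K s A` for all `s` and measurable `A`,
then `c ^ n * (K')ⁿ s A ≤ Kⁿ s A`. -/
theorem kiter_le_kiter {S : Type*} [MeasurableSpace S] {K K' : Kernel S S} {c : ENNReal}
    (h : ∀ s (A : Set S), MeasurableSet A → c * K' s A ≤ K s A) :
    ∀ n s (A : Set S), MeasurableSet A → c ^ n * kiter K' n s A ≤ kiter K n s A := by
  intro n
  induction n with
  | zero => intro s A _; simp [kiter_zero']
  | succ n ih =>
    intro s A hAm
    have hle : (c ^ n • kiter K' n s : Measure S) ≤ kiter K n s :=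
      Measure.le_iff.mpr fun B hB => by
        rw [Measure.smul_apply, smul_eq_mul]; exact ih s B hB
    calc c ^ (n + 1) * kiter K' (n + 1) s A
        = c ^ n * (c * ((K' ∘ₖ kiter K' n) s A)) := by
          rw [kiter_succ', pow_succ, mul_assoc, mul_comm c]
      _ = c ^ n * (c * ∫⁻ u, K' u A ∂(kiter K' n s)) := by
          rw [Kernel.comp_apply' _ _ _ hAm]
      _ = c ^ n * ∫⁻ u, c * K' u A ∂(kiter K' n s) := by
          rw [lintegral_const_mul _ (Kernel.measurable_coe K' hAm)]
      _ = ∫⁻ u, c * K' u A ∂(c ^ n • kiter K' n s) := by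
          rw [lintegral_smul_measure, smul_eq_mul]
      _ ≤ ∫⁻ u, K u A ∂(kiter K n s) :=
          lintegral_mono' hle (fun u => h u A hAm)
      _ = kiter K (n + 1) s A := by rw [kiter_succ', Kernel.comp_apply' _ _ _ hAm]

namespace ClassKernelData

variable {T : Type u} [MeasurableSpace T] {π : Measure T} (d : ClassKernelData.{u, v} T π)

/-- The section of the image `f '' A` over `⟨i, x⟩`. -/
def sec (i : d.I) (x : d.X i) (A : Set T) : Set (d.Y i) :=
  {y | (⟨i, (x, y)⟩ : Σ j : d.I, d.X j × d.Y j) ∈ d.f '' A}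

theorem sec_measurableSet (i : d.I) (x : d.X i) {A : Set T} (hA : MeasurableSet A) :
    MeasurableSet (d.sec i x A) := by
  have h1 : Measurable fun y : d.Y i => (⟨i, (x, y)⟩ : Σ j : d.I, d.X j × d.Y j) :=
    (measurableEmbedding_sigmaMk' i).measurable.comp measurable_prodMk_left
  exact h1 (d.f_image A hA)

theorem mem_sec_iff (i : d.I) (x : d.X i) {A : Set T} {b : T} {y : d.Y i}
    (hb : d.f b = ⟨i, (x, y)⟩) : y ∈ d.sec i x A ↔ b ∈ A := by
  unfold sec
  rw [Set.mem_setOf_eq, ← hb, d.f_inj.mem_set_image]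

/-- The fiber correspondence: iterates of the class kernel `Kf` started at a point `b` of the
fiber over `⟨i, x⟩` agree with iterates of `K i x` started at the `Y`-component of `b`. -/
theorem kiter_Kf_fiber (i : d.I) (x : d.X i) (b : T) (y : d.Y i)
    (hb : d.f b = ⟨i, (x, y)⟩) (n : ℕ) :
    ∀ (A : Set T), MeasurableSet A →
      kiter d.Kf n b A = kiter (d.K i x) n y (d.sec i x A) := by
  classical
  haveI := d.Kf_markov
  haveI := d.K_markov i x
  induction n with
  | zero =>
    intro A hA
    rw [kiter_zero', kiter_zero', Kernel.id_apply, Kernel.id_apply,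
      Measure.dirac_apply' _ hA, Measure.dirac_apply' _ (d.sec_measurableSet i x hA)]
    by_cases hbA : b ∈ A
    · rw [Set.indicator_of_mem hbA, Set.indicator_of_mem ((d.mem_sec_iff i x hb).mpr hbA)]
      rfl
    · rw [Set.indicator_of_notMem hbA,
        Set.indicator_of_notMem (fun hy => hbA ((d.mem_sec_iff i x hb).mp hy))]
  | succ n ih =>
    intro A hA
    haveI hM1 : IsMarkovKernel (kiter d.Kf n) := kiter_isMarkov _ n
    haveI hM2 : IsMarkovKernel (kiter (d.K i x) n) := kiter_isMarkov _ n
    set μn : Measure T := kiter d.Kf n b with hμn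
    set νn : Measure (d.Y i) := kiter (d.K i x) n y with hνn
    set G : Set (d.Y i) := d.sec i x Set.univ with hG
    have hGm : MeasurableSet G := d.sec_measurableSet i x MeasurableSet.univ
    have hνG : νn Gᶜ = 0 := by
      have h1 : νn G = 1 := by
        rw [hG, ← ih Set.univ MeasurableSet.univ]
        exact measure_univ
      rw [measure_compl hGm (measure_ne_top _ _), measure_univ, h1, tsub_self]
    -- the partial inverse of `f` on the fiber over `⟨i, x⟩`
    set g : d.Y i → T := fun y' =>
      if h : ∃ s, d.f s = (⟨i, (x, y')⟩ : Σ j : d.I, d.X j × d.Y j) then h.choose else b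
      with hgdef
    have hgfib : ∀ y' ∈ G, d.f (g y') = (⟨i, (x, y')⟩ : Σ j : d.I, d.X j × d.Y j) := by
      intro y' hy'
      obtain ⟨s, -, hs⟩ := hy'
      have hex : ∃ s, d.f s = (⟨i, (x, y')⟩ : Σ j : d.I, d.X j × d.Y j) := ⟨s, hs⟩
      simp only [hgdef, dif_pos hex]
      exact hex.choose_spec
    have hpre : ∀ S : Set T, g ⁻¹' S = (d.sec i x S ∩ G) ∪ (Gᶜ ∩ {y' | b ∈ S}) := by
      intro S
      ext y'
      by_cases hy' : y' ∈ G
      · have hiff := d.mem_sec_iff (A := S) i x (hgfib y' hy')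
        simp only [Set.mem_preimage, Set.mem_union, Set.mem_inter_iff, Set.mem_compl_iff,
          Set.mem_setOf_eq]
        constructor
        · intro h; exact Or.inl ⟨hiff.mpr h, hy'⟩
        · rintro (⟨h1, -⟩ | ⟨h1, -⟩)
          · exact hiff.mp h1
          · exact absurd hy' h1
      · have hnex : ¬ ∃ s, d.f s = (⟨i, (x, y')⟩ : Σ j : d.I, d.X j × d.Y j) :=
          fun ⟨s, hs⟩ => hy' ⟨s, Set.mem_univ s, hs⟩
        have hgb : g y' = b := dif_neg hnex
        simp only [Set.mem_preimage, hgb, Set.mem_union, Set.mem_inter_iff, Set.mem_compl_iff,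
          Set.mem_setOf_eq]
        constructor
        · intro h; exact Or.inr ⟨hy', h⟩
        · rintro (⟨-, h2⟩ | ⟨-, h⟩)
          · exact absurd h2 hy'
          · exact h
    have hg : Measurable g := by
      intro S hS
      rw [hpre S]
      exact ((d.sec_measurableSet i x hS).inter hGm).union
        (hGm.compl.inter (MeasurableSet.const _))
    have hmap : μn = νn.map g := by
      ext S hS
      rw [Measure.map_apply hg hS, hpre S, hμn, ih S hS]
      apply le_antisymm
      · calc νn (d.sec i x S)
            ≤ νn ((d.sec i x S ∩ G) ∪ Gᶜ) := measure_mono (fun y' hy' => by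
              by_cases h : y' ∈ G
              · exact Or.inl ⟨hy', h⟩
              · exact Or.inr h)
          _ ≤ νn (d.sec i x S ∩ G) + νn Gᶜ := measure_union_le _ _
          _ = νn (d.sec i x S ∩ G) := by rw [hνG, add_zero]
          _ ≤ νn ((d.sec i x S ∩ G) ∪ (Gᶜ ∩ {y' | b ∈ S})) :=
              measure_mono Set.subset_union_left
      · calc νn ((d.sec i x S ∩ G) ∪ (Gᶜ ∩ {y' | b ∈ S}))
            ≤ νn (d.sec i x S ∪ Gᶜ) :=
              measure_mono (Set.union_subset_union Set.inter_subset_left Set.inter_subset_left)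
          _ ≤ νn (d.sec i x S) + νn Gᶜ := measure_union_le _ _
          _ = νn (d.sec i x S) := by rw [hνG, add_zero]
    have hae : ∀ᵐ y' ∂νn, y' ∈ G := by
      rw [MeasureTheory.ae_iff]
      have hcl : {y' : d.Y i | ¬ y' ∈ G} = Gᶜ := rfl
      rw [hcl]
      exact hνG
    calc kiter d.Kf (n + 1) b A
        = ∫⁻ s, d.Kf s A ∂μn := by rw [kiter_succ', Kernel.comp_apply' _ _ _ hA]
      _ = ∫⁻ y', d.Kf (g y') A ∂νn := by
          rw [hmap, lintegral_map (Kernel.measurable_coe _ hA) hg]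
      _ = ∫⁻ y', (d.K i x) y' (d.sec i x A) ∂νn := by
          refine lintegral_congr_ae ?_
          filter_upwards [hae] with y' hy'
          exact d.Kf_eq (g y') A hA i x y' (hgfib y' hy')
      _ = kiter (d.K i x) (n + 1) y (d.sec i x A) := by
          rw [kiter_succ', Kernel.comp_apply' _ _ _ (d.sec_measurableSet i x hA)]

end ClassKernelData


/-- Fix `t ∈ T` and let `K` be the stochastic alternating class kernel built from the finite
family `D` of class functions with weights `p`. For every measurable `A` with `π(A) > 0` and
every member `f = (D k).f` of the family: if `A ⊆ f_x⁻¹(f_x(B_t^∞))`, then `A ∈ R_t^∞`. -/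
theorem stmt5 {T : Type u} [MeasurableSpace T] (π : Measure T) [IsProbabilityMeasure π]
    {m : ℕ} (D : Fin m → ClassKernelData.{u, v} T π)
    (hirr : ∀ k i x, PiIrreducible ((D k).K i x) ((D k).v i x))
    (haper : ∀ k i x, AperiodicK ((D k).K i x) ((D k).v i x))
    (hstat : ∀ k i x, StationaryFor ((D k).K i x) ((D k).v i x))
    (p : Fin m → ENNReal) (hp : ∀ k, 0 < p k ∧ p k < 1) (hpsum : ∑ k, p k = 1)
    (K : Kernel T T) [IsMarkovKernel K]
    (hK : ∀ (t : T) (A : Set T), MeasurableSet A → K t A = ∑ k, p k * (D k).Kf t A)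
    (t : T) (A : Set T) (hA : MeasurableSet A) (hpos : 0 < π A) (k : Fin m)
    (hsub : A ⊆ (D k).fx ⁻¹' ((D k).fx '' Binf K t)) :
    A ∈ Rinf K t := by
  classical
  set d := D k with hd
  haveI : IsProbabilityMeasure (π.map d.f) := Measure.isProbabilityMeasure_map d.f_meas.aemeasurable
  have hFAm : MeasurableSet (d.f '' A) := d.f_image A hA
  have h1 : 0 < π.map d.f (d.f '' A) := by
    rw [Measure.map_apply d.f_meas hFAm]
    exact lt_of_lt_of_le hpos (measure_mono (Set.subset_preimage_image _ _))
  -- find a class `i` of positive mass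
  have hcover : d.f '' A ⊆ ⋃ i, d.f '' A ∩ Set.range (Sigma.mk i) := by
    intro c hc
    exact Set.mem_iUnion.mpr ⟨c.1, hc, ⟨c.2, Sigma.eta c⟩⟩
  obtain ⟨i, hi⟩ : ∃ i, 0 < π.map d.f (d.f '' A ∩ Set.range (Sigma.mk i)) := by
    by_contra hcon
    push_neg at hcon
    have h0 : π.map d.f (d.f '' A) = 0 :=
      measure_mono_null hcover
        (measure_iUnion_null fun i => le_antisymm (hcon i) zero_le)
    exact absurd h0 h1.ne'
  have hi_range : 0 < π.map d.f (Set.range (Sigma.mk i)) :=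
    lt_of_lt_of_le hi (measure_mono Set.inter_subset_right)
  have emb : MeasurableEmbedding (@Sigma.mk d.I (fun j => d.X j × d.Y j) i) :=
    measurableEmbedding_sigmaMk' i
  set ρ : Measure (d.X i × d.Y i) :=
    (π.map d.f).comap (@Sigma.mk d.I (fun j => d.X j × d.Y j) i) with hρdef
  have hρ_apply : ∀ S : Set (d.X i × d.Y i),
      ρ S = π.map d.f (@Sigma.mk d.I (fun j => d.X j × d.Y j) i '' S) :=
    fun S => emb.comap_apply _ S
  set FA : Set (d.X i × d.Y i) :=
    @Sigma.mk d.I (fun j => d.X j × d.Y j) i ⁻¹' (d.f '' A) with hFAdef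
  have hFAm' : MeasurableSet FA := emb.measurable hFAm
  have hρFA : 0 < ρ FA := by
    rw [hρ_apply, hFAdef, Set.image_preimage_eq_inter_range]
    exact hi
  haveI : IsFiniteMeasure ρ := by
    constructor
    rw [hρ_apply, Set.image_univ]
    exact measure_lt_top _ _
  set μX : Measure (d.X i) := ρ.map Prod.fst with hμX
  haveI : IsFiniteMeasure μX := by
    constructor
    rw [hμX, Measure.map_apply measurable_fst MeasurableSet.univ]
    exact measure_lt_top _ _
  set κ : Kernel (d.X i) (d.Y i) :=
    ⟨fun x => d.v i x, Measure.measurable_of_measurable_coe _ (fun s hs => d.v_meas i s hs)⟩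
    with hκdef
  haveI : IsMarkovKernel κ := ⟨fun x => d.v_prob i x⟩
  have hρeq : ρ = μX ⊗ₘ κ := by
    refine ext_of_generate_finite _ generateFrom_prod.symm isPiSystem_prod ?_ ?_
    · rintro s ⟨U, hU, V, hV, rfl⟩
      rw [Measure.compProd_apply_prod hU hV]
      exact d.v_eq i hi_range U V hU hV
    · have h2 : (μX ⊗ₘ κ) Set.univ = μX Set.univ := by
        rw [← Set.univ_prod_univ, Measure.compProd_apply_prod MeasurableSet.univ
          MeasurableSet.univ]
        simp
      rw [h2, hμX, Measure.map_apply measurable_fst MeasurableSet.univ, Set.preimage_univ]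
  have hcomp : 0 < ∫⁻ x, κ x (Prod.mk x ⁻¹' FA) ∂μX := by
    rw [← Measure.compProd_apply hFAm', ← hρeq]
    exact hρFA
  obtain ⟨x₀, hx₀⟩ : ∃ x₀, 0 < κ x₀ (Prod.mk x₀ ⁻¹' FA) := by
    by_contra hcon
    push_neg at hcon
    have hzero : ∫⁻ x, κ x (Prod.mk x ⁻¹' FA) ∂μX = 0 := by
      have h3 : ∀ x, κ x (Prod.mk x ⁻¹' FA) = 0 := fun x => le_antisymm (hcon x) zero_le
      simp [h3]
    exact absurd hzero hcomp.ne'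
  have hvsec : 0 < d.v i x₀ (d.sec i x₀ A) := hx₀
  obtain ⟨c₁, hc₁⟩ := nonempty_of_measure_ne_zero hvsec.ne'
  obtain ⟨a₀, ha₀A, ha₀⟩ := hc₁
  have hfx : d.fx a₀ = ⟨i, x₀⟩ :=
    congrArg (fun c : Σ j : d.I, d.X j × d.Y j => (⟨c.1, c.2.1⟩ : Σ j : d.I, d.X j)) ha₀
  obtain ⟨b, hbB, hbfx⟩ := hsub ha₀A
  rw [hfx] at hbfx
  rcases hfb : d.f b with ⟨j, xb, yb⟩
  have hfxb : d.fx b = ⟨j, xb⟩ :=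
    congrArg (fun c : Σ j : d.I, d.X j × d.Y j => (⟨c.1, c.2.1⟩ : Σ j : d.I, d.X j)) hfb
  rw [hfxb] at hbfx
  have hji : j = i := congrArg Sigma.fst hbfx
  subst hji
  have hxb : xb = x₀ := sigma_mk_injective hbfx
  subst hxb
  obtain ⟨n, hn1, hkpos⟩ := hirr k j xb yb (d.sec j xb A) (d.sec_measurableSet j xb hA) hvsec
  haveI := d.Kf_markov
  haveI := d.K_markov j xb
  have hfib := d.kiter_Kf_fiber j xb b yb hfb n A hA
  have hKfpos : 0 < kiter d.Kf n b A := by rw [hfib]; exact hkpos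
  have hdom : ∀ s (B : Set T), MeasurableSet B → p k * d.Kf s B ≤ K s B := by
    intro s B hB
    rw [hK s B hB]
    exact Finset.single_le_sum (f := fun l => p l * (D l).Kf s B)
      (fun l _ => zero_le) (Finset.mem_univ k)
  have hKpos : 0 < kiter K n b A :=
    lt_of_lt_of_le (ENNReal.mul_pos (pow_ne_zero n (hp k).1.ne') hKfpos.ne')
      (kiter_le_kiter hdom n b A hA)
  set M : Set T := {s | 0 < kiter K n s A} with hMdef
  have hMm : MeasurableSet M := measurableSet_lt measurable_const (Kernel.measurable_coe _ hA)
  have hbM : b ∈ M := hKpos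
  obtain ⟨-, n₁, hn₁, hMreach⟩ := hbB M hMm hbM
  refine ⟨hA, n + n₁, by omega, ?_⟩
  rw [kiter_add' K n n₁, Kernel.comp_apply' _ _ _ hA]
  by_contra hzero
  push_neg at hzero
  have h0 : ∫⁻ s, kiter K n s A ∂(kiter K n₁ t) = 0 := le_antisymm hzero zero_le
  rw [lintegral_eq_zero_iff (Kernel.measurable_coe _ hA)] at h0
  rw [Filter.EventuallyEq, MeasureTheory.ae_iff] at h0
  have hMnull : kiter K n₁ t M = 0 :=
    measure_mono_null (fun s hs => by simpa using (ne_of_gt hs)) h0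
  exact absurd hMnull hMreach.ne'
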